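/- Let $(V, E, c)$ be a connected network with energy Hilbert space $\mathscr{H}_E$, base point $o \in V$, and dipoles $v_x$ satisfying $f(x) - f(o) = \langle v_x, f\rangle_{\mathscr{H}_E}$. Assume every vertex has finite degree. Define the graph Laplacian $(\Delta_c f)(x) = \sum_{y \sim x} c_{xy}(f(x) - f(y))$ and the kernel $k_x(y) = \langle v_y, v_x \rangle_{\mathscr{H}_E}$. Then $(\Delta_c k_x)(y) = \delta_{x,y}$ for all $x, y \in V \setminus \{o\}$. -/

import Mathlib

/-- Finite energy of a function on a network `(V, E, c)`. -/
def FiniteEnergy {V : Type*} (E : Set (V × V)) (c : V → V → ℝ) (f : V → ℂ) : Prop :=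
  Summable fun e : E => c e.1.1 e.1.2 * ‖f e.1.1 - f e.1.2‖ ^ 2

/-- The energy inner product `⟨f, g⟩ = ½ ∑_{(x,y)∈E} c_{xy} conj(f x - f y)(g x - g y)`. -/
noncomputable def energyProd {V : Type*} (E : Set (V × V)) (c : V → V → ℝ)
    (f g : V → ℂ) : ℂ :=
  (1 / 2) * ∑' e : E,
    (c e.1.1 e.1.2 : ℂ) * (starRingEnd ℂ) (f e.1.1 - f e.1.2) * (g e.1.1 - g e.1.2)

/-- Let `(V, E, c)` be a connected network in which every vertex
has finite degree, with base point `o` and dipoles `v x` of finite energy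
satisfying `f x - f o = ⟨v x, f⟩_{H_E}` for all finite-energy `f`. Define the
kernel `k_x (y) = ⟨v y, v x⟩_{H_E}` and the graph Laplacian
`(Δ_c g)(y) = ∑_{z ∼ y} c_{yz} (g y - g z)`. Then `(Δ_c k_x)(y) = δ_{x,y}`
for all `x, y ∈ V \ {o}`. -/
theorem stmt_8 {V : Type*} [Countable V] [DecidableEq V]
    (E : Set (V × V)) (hEsym : ∀ a b : V, (a, b) ∈ E → (b, a) ∈ E)
    (hloop : ∀ a : V, (a, a) ∉ E)
    (c : V → V → ℝ) (hcsym : ∀ a b : V, c a b = c b a)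
    (hcpos : ∀ p ∈ E, 0 < c p.1 p.2)
    (hconn : ∀ a b : V, Relation.ReflTransGen (fun s t => (s, t) ∈ E) a b)
    (hfin : ∀ a : V, {b : V | (a, b) ∈ E}.Finite)
    (o : V) (v : V → V → ℂ)
    (hvE : ∀ x : V, FiniteEnergy E c (v x))
    (hdip : ∀ (x : V) (f : V → ℂ), FiniteEnergy E c f →
      f x - f o = energyProd E c (v x) f)
    (x y : V) (hx : x ≠ o) (hy : y ≠ o) :
    (∑ z ∈ (hfin y).toFinset,
        (c y z : ℂ) * (energyProd E c (v y) (v x) - energyProd E c (v z) (v x)))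
      = if x = y then 1 else 0 := by
  classical
  set δ : V → ℂ := fun w => if w = y then 1 else 0 with hδdef
  set N : Finset V := (hfin y).toFinset with hNdef
  have hNy : ∀ z, z ∈ N ↔ (y, z) ∈ E := fun z => (hfin y).mem_toFinset
  set T : Finset (V × V) := N.image (fun z => (y, z)) ∪ N.image (fun z => (z, y)) with hTdef
  have hTE : ∀ p ∈ T, p ∈ E := by
    intro p hp
    rcases Finset.mem_union.mp hp with h | h <;>
      obtain ⟨z, hz, rfl⟩ := Finset.mem_image.mp h
    · exact (hNy z).mp hz
    · exact hEsym _ _ ((hNy z).mp hz)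
  set s : Finset ↥E := T.preimage Subtype.val Subtype.val_injective.injOn with hsdef
  -- outside s, δ vanishes on both endpoints
  have hout : ∀ e : ↥E, e ∉ s → e.1.1 ≠ y ∧ e.1.2 ≠ y := by
    intro e he
    constructor
    · intro h1
      apply he
      rw [hsdef, Finset.mem_preimage, hTdef, Finset.mem_union]
      left
      refine Finset.mem_image.mpr ⟨e.1.2, ?_, ?_⟩
      · exact (hNy _).mpr (by rw [← h1]; exact e.2)
      · rw [← h1]
    · intro h2
      apply he
      rw [hsdef, Finset.mem_preimage, hTdef, Finset.mem_union]
      right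
      refine Finset.mem_image.mpr ⟨e.1.1, ?_, ?_⟩
      · refine (hNy _).mpr (hEsym _ _ ?_)
        rw [← h2]; exact e.2
      · rw [← h2]
  have hδzero : ∀ e : ↥E, e ∉ s → δ e.1.1 - δ e.1.2 = 0 := by
    intro e he
    obtain ⟨h1, h2⟩ := hout e he
    simp [hδdef, h1, h2]
  -- δ has finite energy
  have hδE : FiniteEnergy E c δ := by
    apply summable_of_ne_finset_zero (s := s)
    intro e he
    rw [hδzero e he]
    simp
  -- compute energyProd (v x) δ
  have hne : ∀ z ∈ N, z ≠ y := by
    intro z hz h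
    exact hloop y (h ▸ (hNy z).mp hz)
  have hdisj : Disjoint (N.image (fun z => (y, z))) (N.image (fun z => (z, y))) := by
    rw [Finset.disjoint_left]
    intro p hp hq
    obtain ⟨z, hz, rfl⟩ := Finset.mem_image.mp hp
    obtain ⟨w, hw, hwp⟩ := Finset.mem_image.mp hq
    have : w = y := congrArg Prod.fst hwp
    have : z = y := by
      have h := congrArg Prod.snd hwp; simpa using h.symm
    exact hne z hz this
  have key : energyProd E c (v x) δ
      = ∑ z ∈ N, (c y z : ℂ) * (starRingEnd ℂ) (v x y - v x z) := by
    rw [energyProd]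
    have htsum : (∑' e : ↥E,
        (c e.1.1 e.1.2 : ℂ) * (starRingEnd ℂ) (v x e.1.1 - v x e.1.2) * (δ e.1.1 - δ e.1.2))
        = ∑ e ∈ s, (c e.1.1 e.1.2 : ℂ) * (starRingEnd ℂ) (v x e.1.1 - v x e.1.2) * (δ e.1.1 - δ e.1.2) := by
      apply tsum_eq_sum
      intro e he
      rw [hδzero e he, mul_zero]
    rw [htsum]
    have hpre : (∑ e ∈ s, (c e.1.1 e.1.2 : ℂ) * (starRingEnd ℂ) (v x e.1.1 - v x e.1.2) * (δ e.1.1 - δ e.1.2))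
        = ∑ p ∈ T, (c p.1 p.2 : ℂ) * (starRingEnd ℂ) (v x p.1 - v x p.2) * (δ p.1 - δ p.2) := by
      rw [hsdef]
      exact Finset.sum_preimage Subtype.val T _
        (fun p => (c p.1 p.2 : ℂ) * (starRingEnd ℂ) (v x p.1 - v x p.2) * (δ p.1 - δ p.2))
        (fun p hp hnp => absurd (by rw [Subtype.range_val]; exact hTE p hp) hnp)
    rw [hpre, hTdef, Finset.sum_union hdisj, Finset.sum_image (by intro a _ b _ h; exact (Prod.mk.injEq _ _ _ _).mp h |>.2),
      Finset.sum_image (by intro a _ b _ h; exact (Prod.mk.injEq _ _ _ _).mp h |>.1)]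
    have h1 : ∀ z ∈ N, (c y z : ℂ) * (starRingEnd ℂ) (v x y - v x z) * (δ y - δ z)
        = (c y z : ℂ) * (starRingEnd ℂ) (v x y - v x z) := by
      intro z hz
      have : δ y - δ z = 1 := by simp [hδdef, hne z hz]
      rw [this, mul_one]
    have h2 : ∀ z ∈ N, (c z y : ℂ) * (starRingEnd ℂ) (v x z - v x y) * (δ z - δ y)
        = (c y z : ℂ) * (starRingEnd ℂ) (v x y - v x z) := by
      intro z hz
      have hd : δ z - δ y = -1 := by simp [hδdef, hne z hz]
      rw [hd, hcsym z y]
      have : (starRingEnd ℂ) (v x z - v x y) = -(starRingEnd ℂ) (v x y - v x z) := by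
        rw [← map_neg]; ring_nf
      rw [this]; ring
    rw [Finset.sum_congr rfl h1, Finset.sum_congr rfl h2]
    ring
  -- apply hdip with f = δ
  have hmain : (if x = y then (1:ℂ) else 0)
      = ∑ z ∈ N, (c y z : ℂ) * (starRingEnd ℂ) (v x y - v x z) := by
    have := hdip x δ hδE
    rw [key] at this
    have hδo : δ o = 0 := by simp [hδdef, Ne.symm hy]
    have hδx : δ x = if x = y then 1 else 0 := rfl
    rw [hδo, sub_zero, hδx] at this
    exact this
  -- conjugate
  have hmain' : (if x = y then (1:ℂ) else 0)
      = ∑ z ∈ N, (c y z : ℂ) * (v x y - v x z) := by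
    have := congrArg (starRingEnd ℂ) hmain
    rw [map_sum] at this
    simp only [map_mul, Complex.conj_ofReal, RingHomCompTriple.comp_apply, RingHom.id_apply,
      Complex.conj_conj] at this
    rwa [show (starRingEnd ℂ) (if x = y then (1:ℂ) else 0) = if x = y then 1 else 0 by
      split <;> simp] at this
  -- rewrite energyProd via hdip applied to v x
  have hEP : ∀ w : V, energyProd E c (v w) (v x) = v x w - v x o :=
    fun w => (hdip w (v x) (hvE x)).symm
  calc (∑ z ∈ N, (c y z : ℂ) * (energyProd E c (v y) (v x) - energyProd E c (v z) (v x)))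
      = ∑ z ∈ N, (c y z : ℂ) * (v x y - v x z) := by
        apply Finset.sum_congr rfl
        intro z hz
        rw [hEP y, hEP z]
        ring_nf
    _ = if x = y then 1 else 0 := hmain'.symm
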